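/- Let (Θ, 𝓕) be a measurable space, Q a probability measure on Θ, Θ₀ ⊆ Θ measurable, and β : Θ → ℝ measurable with 0 ≤ β(θ) ≤ 1 for all θ. Let C > 0, R > 0 and α ∈ (0, 1], and set the p-value threshold τ = α·C/R. If β(θ) ≤ τ for every θ ∈ Θ₀ and ∫_Θ β dQ ≥ C/R, then (∫_{Θ₀} β dQ) / (∫_Θ β dQ) ≤ α; that is, the principal guarantees Bayes FDR at most α by choosing τ = αC/R. -/

import Mathlib

open MeasureTheory

/-- Corollary of Theorem 1: choosing τ = αC/R guarantees Bayes FDR at most α. -/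
theorem bayes_fdr_level_alpha
    {Θ : Type*} [MeasurableSpace Θ]
    (Q : Measure Θ) [IsProbabilityMeasure Q]
    (Θ₀ : Set Θ) (hΘ₀ : MeasurableSet Θ₀)
    (β : Θ → ℝ) (hβmeas : Measurable β)
    (hβ0 : ∀ θ, 0 ≤ β θ) (hβ1 : ∀ θ, β θ ≤ 1)
    (C R α τ : ℝ) (hC : 0 < C) (hR : 0 < R)
    (hα0 : 0 < α) (hα1 : α ≤ 1)
    (hτdef : τ = α * C / R)
    (hvalid : ∀ θ ∈ Θ₀, β θ ≤ τ)
    (hparticipate : ∫ θ, β θ ∂Q ≥ C / R) :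
    (∫ θ in Θ₀, β θ ∂Q) / (∫ θ, β θ ∂Q) ≤ α := by
  have hint : Integrable β Q := by
    refine (integrable_const (1:ℝ)).mono' hβmeas.aestronglyMeasurable ?_
    filter_upwards with θ
    rw [Real.norm_eq_abs, abs_of_nonneg (hβ0 θ)]
    exact hβ1 θ
  have hτ0 : 0 ≤ τ := by
    rw [hτdef]; positivity
  have hpos : 0 < ∫ θ, β θ ∂Q := lt_of_lt_of_le (by positivity) hparticipate
  rw [div_le_iff₀ hpos]
  have h1 : ∫ θ in Θ₀, β θ ∂Q ≤ τ := by
    calc ∫ θ in Θ₀, β θ ∂Q ≤ ∫ _ in Θ₀, τ ∂Q := by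
          refine setIntegral_mono_on (hint.integrableOn) (integrableOn_const (measure_lt_top Q Θ₀).ne) hΘ₀ hvalid
      _ = τ * (Q Θ₀).toReal := by rw [setIntegral_const, smul_eq_mul, mul_comm, measureReal_def]
      _ ≤ τ * 1 := by
          refine mul_le_mul_of_nonneg_left ?_ hτ0
          exact ENNReal.toReal_le_of_le_ofReal one_pos.le (by simpa using prob_le_one)
      _ = τ := mul_one τ
  calc ∫ θ in Θ₀, β θ ∂Q ≤ τ := h1
    _ = α * (C / R) := by rw [hτdef]; ring
    _ ≤ α * ∫ θ, β θ ∂Q := mul_le_mul_of_nonneg_left hparticipate hα0.le
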